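/- For all a > 0 and x > 0, x^a γ(a, x)² − x^a Γ(a)² + 2 γ(a, x) Γ(2a, x) > 0, where Γ(a) = ∫₀^∞ t^{a−1} e^{−t} dt is the gamma function, Γ(a, x) = ∫ₓ^∞ t^{a−1} e^{−t} dt is the upper incomplete gamma function, and γ(a, x) = ∫₀ˣ t^{a−1} e^{−t} dt is the lower incomplete gamma function. -/

import Mathlib

open MeasureTheory Real

section
open Set Filter

namespace IncGammaAux

noncomputable def f (a t : ℝ) : ℝ := t ^ (a - 1) * Real.exp (-t)
noncomputable def g (a x : ℝ) : ℝ := ∫ t in (0:ℝ)..x, f a t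
noncomputable def G (a : ℝ) : ℝ := ∫ t in Set.Ioi (0:ℝ), f a t

lemma f_meas (a : ℝ) : Measurable (f a) := by unfold f; fun_prop

lemma f_int {a : ℝ} (ha : 0 < a) : IntegrableOn (f a) (Set.Ioi 0) := by
  have h := Real.GammaIntegral_convergent ha
  exact h.congr_fun (fun t _ => mul_comm _ _) measurableSet_Ioi

lemma f_intInt {a : ℝ} (ha : 0 < a) {x : ℝ} (hx : 0 ≤ x) :
    IntervalIntegrable (f a) volume 0 x := by
  rw [intervalIntegrable_iff_integrableOn_Ioc_of_le hx]
  exact (f_int ha).mono_set Set.Ioc_subset_Ioi_self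

lemma f_nonneg {a t : ℝ} (ht : 0 ≤ t) : 0 ≤ f a t :=
  mul_nonneg (Real.rpow_nonneg ht _) (Real.exp_pos _).le

lemma f_pos {a t : ℝ} (ht : 0 < t) : 0 < f a t :=
  mul_pos (Real.rpow_pos_of_pos ht _) (Real.exp_pos _)

lemma f_continuousAt {a t : ℝ} (ht : 0 < t) : ContinuousAt (f a) t :=
  (Real.continuousAt_rpow_const t (a - 1) (Or.inl ht.ne')).mul
    (Real.continuous_exp.comp continuous_neg).continuousAt

lemma hasDerivAt_g {a : ℝ} (ha : 0 < a) {t : ℝ} (ht : 0 < t) :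
    HasDerivAt (g a) (f a t) t :=
  intervalIntegral.integral_hasDerivAt_right (f_intInt ha ht.le)
    ((f_meas a).stronglyMeasurable.stronglyMeasurableAtFilter)
    (f_continuousAt ht)

lemma g_nonneg {a x : ℝ} (hx : 0 ≤ x) : 0 ≤ g a x :=
  intervalIntegral.integral_nonneg hx fun t ht => f_nonneg ht.1

lemma g_pos {a : ℝ} (ha : 0 < a) {x : ℝ} (hx : 0 < x) : 0 < g a x :=
  intervalIntegral.intervalIntegral_pos_of_pos_on
    (f_intInt ha hx.le) (fun t ht => f_pos ht.1) hx

lemma g_eq_setIntegral {a x : ℝ} (hx : 0 ≤ x) :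
    g a x = ∫ t in Set.Ioc 0 x, f a t := by
  rw [g, intervalIntegral.integral_of_le hx]

lemma g_le_G {a : ℝ} (ha : 0 < a) {x : ℝ} (hx : 0 ≤ x) : g a x ≤ G a := by
  rw [g_eq_setIntegral hx]
  refine MeasureTheory.setIntegral_mono_set (f_int ha) ?_ ?_
  · filter_upwards [ae_restrict_mem measurableSet_Ioi] with t ht
    exact f_nonneg (le_of_lt ht)
  · exact HasSubset.Subset.eventuallyLE Set.Ioc_subset_Ioi_self

lemma tendsto_g {a : ℝ} (ha : 0 < a) : Tendsto (g a) atTop (nhds (G a)) :=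
  MeasureTheory.intervalIntegral_tendsto_integral_Ioi 0 (f_int ha) tendsto_id

/-- Key comparison: `a * g a x > x^a * exp(-x)` for `x > 0`. -/
lemma key {a : ℝ} (ha : 0 < a) {x : ℝ} (hx : 0 < x) :
    x ^ a * Real.exp (-x) < a * g a x := by
  have h1 : a * g a x = ∫ t in (0:ℝ)..x, a * f a t := by
    rw [g, intervalIntegral.integral_const_mul]
  have h2 : x ^ a * Real.exp (-x) = ∫ t in (0:ℝ)..x, a * t ^ (a - 1) * Real.exp (-x) := by
    rw [intervalIntegral.integral_mul_const, intervalIntegral.integral_const_mul,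
      integral_rpow (Or.inl (by linarith))]
    rw [sub_add_cancel, Real.zero_rpow ha.ne']
    field_simp
    simp
  rw [h1, h2, ← sub_pos, ← intervalIntegral.integral_sub]
  · apply intervalIntegral.intervalIntegral_pos_of_pos_on _ _ hx
    · apply IntervalIntegrable.sub
      · exact (f_intInt ha hx.le).const_mul a
      · exact (((intervalIntegral.intervalIntegrable_rpow' (by linarith)).const_mul a).mul_const _)
    · intro t ht
      have htp : 0 < t := ht.1
      have : Real.exp (-x) < Real.exp (-t) := Real.exp_lt_exp.2 (by linarith [ht.2])
      have hr : 0 < t ^ (a - 1) := Real.rpow_pos_of_pos htp _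
      simp only [f]
      nlinarith [mul_pos (mul_pos ha hr) (sub_pos.2 this)]
  · exact (f_intInt ha hx.le).const_mul a
  · exact ((intervalIntegral.intervalIntegrable_rpow' (by linarith)).const_mul a).mul_const _

/-- Pointwise bound: for `0 < x < t`, `x^a * g a t < g a x * t^a`. -/
lemma pointwise {a : ℝ} (ha : 0 < a) {x t : ℝ} (hx : 0 < x) (ht : x < t) :
    x ^ a * g a t < g a x * t ^ a := by
  set u : ℝ → ℝ := fun t => g a x * t ^ a - x ^ a * g a t with hu
  have hderiv : ∀ s ∈ Set.Ioi x, HasDerivAt u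
      (g a x * (a * s ^ (a - 1)) - x ^ a * f a s) s := by
    intro s hs
    have hs0 : 0 < s := hx.trans hs
    exact ((Real.hasDerivAt_rpow_const (Or.inl hs0.ne')).const_mul _).sub
      ((hasDerivAt_g ha hs0).const_mul _)
  have hmono : StrictMonoOn u (Set.Ici x) := by
    apply strictMonoOn_of_deriv_pos (convex_Ici x)
    · intro s hs
      have hs0 : 0 < s := lt_of_lt_of_le hx hs
      exact (((Real.hasDerivAt_rpow_const (Or.inl hs0.ne')).const_mul _).sub
        ((hasDerivAt_g ha hs0).const_mul _)).continuousAt.continuousWithinAt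
    · intro s hs
      rw [interior_Ici] at hs
      rw [(hderiv s hs).deriv]
      have hs0 : 0 < s := hx.trans hs
      have hkey : x ^ a * Real.exp (-x) < a * g a x := key ha hx
      have hee : Real.exp (-s) < Real.exp (-x) := Real.exp_lt_exp.2 (by linarith [Set.mem_Ioi.1 hs])
      have hr : 0 < s ^ (a - 1) := Real.rpow_pos_of_pos hs0 _
      have hxa : 0 < x ^ a := Real.rpow_pos_of_pos hx _
      have h3 : x ^ a * Real.exp (-s) < a * g a x :=
        lt_trans (mul_lt_mul_of_pos_left hee hxa) hkey
      have h4 : 0 < s ^ (a - 1) * (a * g a x - x ^ a * Real.exp (-s)) :=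
        mul_pos hr (by linarith)
      simp only [f]
      nlinarith [h4]
  have := hmono (Set.self_mem_Ici) (Set.mem_Ici.2 (le_of_lt ht)) ht
  simp only [hu] at this
  nlinarith

/-- The improper FTC identity: `∫_{t>x} f t * g t = (G² - g x²)/2`. -/
lemma identity {a : ℝ} (ha : 0 < a) {x : ℝ} (hx : 0 < x) :
    ∫ t in Set.Ioi x, f a t * g a t = G a ^ 2 / 2 - g a x ^ 2 / 2 := by
  have hint : IntegrableOn (fun t => f a t * g a t) (Set.Ioi x) := by
    apply MeasureTheory.Integrable.mono' (g := fun t => f a t * G a)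
    · exact ((f_int ha).mono_set (Set.Ioi_subset_Ioi hx.le)).mul_const _
    · apply ContinuousOn.aestronglyMeasurable _ measurableSet_Ioi
      intro t ht
      have ht0 : 0 < t := hx.trans ht
      exact ((f_continuousAt ht0).mul (hasDerivAt_g ha ht0).continuousAt).continuousWithinAt
    · filter_upwards [ae_restrict_mem measurableSet_Ioi] with t ht
      have ht0 : 0 < t := hx.trans ht
      rw [Real.norm_eq_abs, abs_of_nonneg (mul_nonneg (f_nonneg ht0.le) (g_nonneg ht0.le))]
      exact mul_le_mul_of_nonneg_left (g_le_G ha ht0.le) (f_nonneg ht0.le)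
  have h := MeasureTheory.integral_Ioi_of_hasDerivAt_of_tendsto
    (f := fun t => g a t ^ 2 / 2) (f' := fun t => f a t * g a t) (a := x)
    (m := G a ^ 2 / 2) ?_ ?_ hint ?_
  · rw [h]
  · exact (((hasDerivAt_g ha hx).pow 2).div_const 2).continuousAt.continuousWithinAt
  · intro s hs
    have hs0 : 0 < s := hx.trans hs
    have := ((hasDerivAt_g ha hs0).fun_pow 2).div_const 2
    refine this.congr_deriv ?_
    ring
  · exact (((tendsto_g ha).pow 2).div_const 2)

lemma fg_int {a : ℝ} (ha : 0 < a) {x : ℝ} (hx : 0 < x) :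
    IntegrableOn (fun t => f a t * g a t) (Set.Ioi x) := by
  apply MeasureTheory.Integrable.mono' (g := fun t => f a t * G a)
  · exact ((f_int ha).mono_set (Set.Ioi_subset_Ioi hx.le)).mul_const _
  · apply ContinuousOn.aestronglyMeasurable _ measurableSet_Ioi
    intro t ht
    have ht0 : 0 < t := hx.trans ht
    exact ((f_continuousAt ht0).mul (hasDerivAt_g ha ht0).continuousAt).continuousWithinAt
  · filter_upwards [ae_restrict_mem measurableSet_Ioi] with t ht
    have ht0 : 0 < t := hx.trans ht
    rw [Real.norm_eq_abs, abs_of_nonneg (mul_nonneg (f_nonneg ht0.le) (g_nonneg ht0.le))]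
    exact mul_le_mul_of_nonneg_left (g_le_G ha ht0.le) (f_nonneg ht0.le)

lemma main {a : ℝ} (ha : 0 < a) {x : ℝ} (hx : 0 < x) :
    0 < x ^ a * (g a x) ^ 2 - x ^ a * (G a) ^ 2
      + 2 * g a x * ∫ t in Set.Ioi x, f (2 * a) t := by
  have ha2 : 0 < 2 * a := by linarith
  have hf2int : IntegrableOn (f (2 * a)) (Set.Ioi x) :=
    (f_int ha2).mono_set (Set.Ioi_subset_Ioi hx.le)
  -- the strict integral inequality
  have hpos : 0 < ∫ t in Set.Ioi x,
      (g a x * f (2 * a) t - x ^ a * (f a t * g a t)) := by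
    rw [MeasureTheory.setIntegral_pos_iff_support_of_nonneg_ae]
    · refine lt_of_lt_of_le ?_ (measure_mono (Set.subset_inter ?_ (le_refl _)))
      · rw [Real.volume_Ioi]; exact ENNReal.zero_lt_top
      · intro t ht
        have ht0 : 0 < t := hx.trans ht
        have h1 : x ^ a * g a t < g a x * t ^ a := pointwise ha hx ht
        have h2 : f (2 * a) t = t ^ a * f a t := by
          simp only [f]
          rw [show 2 * a - 1 = a + (a - 1) by ring, Real.rpow_add ht0]
          ring
        simp only [Function.mem_support, h2]
        have hft : 0 < f a t := f_pos ht0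
        refine ne_of_gt ?_
        have h3 : 0 < f a t * (g a x * t ^ a - x ^ a * g a t) :=
          mul_pos hft (sub_pos.2 h1)
        ring_nf at h3 ⊢
        linarith
    · filter_upwards [ae_restrict_mem measurableSet_Ioi] with t ht
      have ht0 : 0 < t := hx.trans ht
      have h1 : x ^ a * g a t < g a x * t ^ a := pointwise ha hx ht
      have h2 : f (2 * a) t = t ^ a * f a t := by
        simp only [f]
        rw [show 2 * a - 1 = a + (a - 1) by ring, Real.rpow_add ht0]
        ring
      have hft : 0 < f a t := f_pos ht0
      rw [h2]
      have h3 : 0 < f a t * (g a x * t ^ a - x ^ a * g a t) :=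
        mul_pos hft (sub_pos.2 h1)
      simp only [Pi.zero_apply]
      ring_nf at h3 ⊢
      linarith
    · exact (hf2int.const_mul _).sub ((fg_int ha hx).const_mul _)
  have hsplit : (∫ t in Set.Ioi x, (g a x * f (2 * a) t - x ^ a * (f a t * g a t)))
      = g a x * (∫ t in Set.Ioi x, f (2 * a) t)
        - x ^ a * ∫ t in Set.Ioi x, f a t * g a t := by
    rw [MeasureTheory.integral_sub (hf2int.const_mul _) ((fg_int ha hx).const_mul _),
      MeasureTheory.integral_const_mul, MeasureTheory.integral_const_mul]
  have hI := identity ha hx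
  rw [hsplit, hI] at hpos
  nlinarith [hpos]

end IncGammaAux

end

/-- For all `a > 0` and `x > 0`,
`x^a γ(a,x)² − x^a Γ(a)² + 2 γ(a,x) Γ(2a,x) > 0`, where `Γ(a)` is the gamma
function, `Γ(a,x) = ∫ₓ^∞ t^(a−1) e^(−t) dt` the upper incomplete gamma
function, and `γ(a,x) = ∫₀ˣ t^(a−1) e^(−t) dt` the lower one. -/
theorem incomplete_gamma_inequality (a x : ℝ) (ha : 0 < a) (hx : 0 < x) :
    0 < x ^ a * (∫ t in (0:ℝ)..x, t ^ (a - 1) * Real.exp (-t)) ^ 2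
        - x ^ a * (∫ t in Set.Ioi (0:ℝ), t ^ (a - 1) * Real.exp (-t)) ^ 2
        + 2 * (∫ t in (0:ℝ)..x, t ^ (a - 1) * Real.exp (-t))
            * (∫ t in Set.Ioi x, t ^ (2 * a - 1) * Real.exp (-t)) := by
  have h := IncGammaAux.main ha hx
  simp only [IncGammaAux.g, IncGammaAux.G, IncGammaAux.f] at h
  linarith [h]
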